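/- For all n ≥ 0, x^n = Σ_{k=0}^{⌊n/2⌋} (C(n,k) - C(n,k-1)) f_{n-2k}(x), where f_j are the Fibonacci-type polynomials. -/

import Mathlib

section Aux

variable (f : ℕ → ℝ → ℝ) (x : ℝ)

/-- Extension of `f` to integer indices satisfying the same recurrence. -/
noncomputable def Fz : ℤ → ℝ := fun j =>
  if 0 ≤ j then f j.toNat x else if j = -1 then 0 else -(f (-j - 2).toNat x)

lemma Fz_nat (m : ℕ) : Fz f x (m : ℤ) = f m x := by simp [Fz]

lemma Fz_negone : Fz f x (-1) = 0 := by simp [Fz]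

lemma Fz_neg (m : ℕ) : Fz f x (-(m : ℤ) - 2) = -(f m x) := by
  have h : ¬ (0 ≤ -(m:ℤ) - 2) := by omega
  have h2 : ¬ (-(m:ℤ) - 2 = -1) := by omega
  have h3 : (-(-(m:ℤ) - 2) - 2).toNat = m := by omega
  simp only [Fz, if_neg h, if_neg h2, h3]

lemma Fz_anti (j : ℤ) : Fz f x (-j - 2) = - Fz f x j := by
  rcases le_or_gt 0 j with h | h
  · lift j to ℕ using h
    rw [Fz_neg, Fz_nat]
  · rcases eq_or_lt_of_le (show j ≤ -1 by omega) with h1 | h1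
    · subst h1
      rw [show -(-1:ℤ) - 2 = (-1:ℤ) by norm_num, Fz_negone]
      norm_num
    · obtain ⟨m, hm⟩ : ∃ m : ℕ, j = -(m:ℤ) - 2 := ⟨(-j - 2).toNat, by omega⟩
      subst hm
      rw [show -(-(m:ℤ) - 2) - 2 = (m : ℤ) by ring, Fz_nat, Fz_neg, neg_neg]

lemma Fz_rec (h0 : ∀ x, f 0 x = 1) (h1 : ∀ x, f 1 x = x)
    (hrec : ∀ n x, f (n + 2) x = x * f (n + 1) x - f n x) (j : ℤ) :
    x * Fz f x j = Fz f x (j + 1) + Fz f x (j - 1) := by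
  have key : ∀ m : ℕ, x * f (m + 1) x = f (m + 2) x + f m x := fun m => by
    rw [hrec]; ring
  rcases le_or_gt 0 j with h | h
  · lift j to ℕ using h
    match j with
    | 0 =>
      rw [show ((0:ℕ):ℤ) + 1 = ((1:ℕ):ℤ) by norm_num,
        show ((0:ℕ):ℤ) - 1 = -1 by norm_num, Fz_nat, Fz_nat, Fz_negone, h0, h1]
      ring
    | (m+1) =>
      rw [show ((m+1:ℕ):ℤ) + 1 = ((m+2:ℕ):ℤ) by push_cast; ring,
        show ((m+1:ℕ):ℤ) - 1 = ((m:ℕ):ℤ) by push_cast; ring,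
        Fz_nat, Fz_nat, Fz_nat, key]
  · obtain ⟨m, hm⟩ : ∃ m : ℕ, j = -(m:ℤ) - 1 := ⟨(-j - 1).toNat, by omega⟩
    subst hm
    match m with
    | 0 =>
      rw [show -((0:ℕ):ℤ) - 1 = -1 by norm_num, Fz_negone,
        show (-1 : ℤ) + 1 = ((0:ℕ):ℤ) by norm_num,
        show (-1 : ℤ) - 1 = -((0:ℕ):ℤ) - 2 by norm_num, Fz_nat, Fz_neg, h0]
      ring
    | 1 =>
      rw [show -((1:ℕ):ℤ) - 1 + 1 = -1 by norm_num,
        show -((1:ℕ):ℤ) - 1 - 1 = -((1:ℕ):ℤ) - 2 by norm_num,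
        show -((1:ℕ):ℤ) - 1 = -((0:ℕ):ℤ) - 2 by norm_num,
        Fz_neg, Fz_negone, Fz_neg, h0, h1]
      ring
    | (k+2) =>
      rw [show -((k+2:ℕ):ℤ) - 1 + 1 = -((k:ℕ):ℤ) - 2 by push_cast; ring,
        show -((k+2:ℕ):ℤ) - 1 - 1 = -((k+2:ℕ):ℤ) - 2 by push_cast; ring,
        show -((k+2:ℕ):ℤ) - 1 = -((k+1:ℕ):ℤ) - 2 by push_cast; ring,
        Fz_neg, Fz_neg, Fz_neg]
      linarith [key k]

/-- The coefficient. -/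
noncomputable def bb (n k : ℕ) : ℝ :=
  (n.choose k : ℝ) - (if k = 0 then 0 else (n.choose (k - 1) : ℝ))

lemma bb_pascal (n k : ℕ) :
    bb (n+1) k = bb n k + (if k = 0 then 0 else bb n (k-1)) := by
  match k with
  | 0 => simp [bb]
  | 1 =>
    simp only [bb, if_neg (one_ne_zero), if_pos rfl]
    rw [Nat.choose_succ_succ n 0]
    push_cast
    simp [Nat.choose_zero_right, Nat.choose_one_right]
  | (j+2) =>
    simp only [bb, show j + 2 ≠ 0 by omega, show j + 2 - 1 = j + 1 by omega,
      show j + 1 ≠ 0 by omega, show j + 1 - 1 = j by omega, if_neg, if_false]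
    rw [Nat.choose_succ_succ n (j+1), Nat.choose_succ_succ n j]
    push_cast
    ring

lemma bb_refl (n k : ℕ) (hk : k ≤ n + 1) : bb n (n + 1 - k) = - bb n k := by
  match k with
  | 0 =>
    simp only [Nat.sub_zero, bb, if_pos rfl, if_neg (show n + 1 ≠ 0 by omega),
      show n + 1 - 1 = n by omega, Nat.choose_self,
      Nat.choose_eq_zero_of_lt (show n < n + 1 by omega)]
    norm_num
  | (j+1) =>
    by_cases hj : j + 1 = n + 1
    · have hjn : j = n := by omega
      subst hjn
      simp only [Nat.sub_self, bb, if_pos rfl, if_neg (show j + 1 ≠ 0 by omega),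
        Nat.choose_zero_right, Nat.choose_self, Nat.add_sub_cancel,
        Nat.choose_eq_zero_of_lt (show j < j + 1 by omega)]
      norm_num
    · have hkn : j + 1 ≤ n := by omega
      have e1 : n + 1 - (j + 1) = n - j := by omega
      have e2 : n + 1 - (j + 1) ≠ 0 := by omega
      have e3 : n + 1 - (j + 1) - 1 = n - (j + 1) := by omega
      simp only [bb, if_neg e2, if_neg (show j + 1 ≠ 0 by omega), e3, e1,
        Nat.add_sub_cancel]
      rw [if_neg (show ¬ n - j = 0 by omega), Nat.sub_sub,
        show n - j = n - j from rfl]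
      rw [show n.choose (n - j) = n.choose j from by
          rw [Nat.choose_symm (show j ≤ n by omega)],
        show n.choose (n - (j + 1)) = n.choose (j + 1) from by
          rw [Nat.choose_symm hkn]]
      ring

lemma main (h0 : ∀ x, f 0 x = 1) (h1 : ∀ x, f 1 x = x)
    (hrec : ∀ n x, f (n + 2) x = x * f (n + 1) x - f n x) (n : ℕ) :
    2 * x ^ n = ∑ k ∈ Finset.range (n + 2), bb n k * Fz f x ((n : ℤ) - 2 * k) := by
  induction n with
  | zero =>
    rw [Finset.sum_range_succ, Finset.sum_range_succ, Finset.sum_range_zero]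
    rw [show ((0:ℕ):ℤ) - 2 * (0:ℕ) = ((0:ℕ):ℤ) by norm_num,
      show ((0:ℕ):ℤ) - 2 * (1:ℕ) = -((0:ℕ):ℤ) - 2 by norm_num, Fz_nat, Fz_neg, h0]
    norm_num [bb]
  | succ n ih =>
    have step1 : (2:ℝ) * x ^ (n+1)
        = ∑ k ∈ Finset.range (n + 2),
            bb n k * (Fz f x ((n:ℤ) - 2 * k + 1) + Fz f x ((n:ℤ) - 2 * k - 1)) := by
      calc (2:ℝ) * x ^ (n+1) = x * (2 * x ^ n) := by ring
        _ = ∑ k ∈ Finset.range (n + 2), bb n k * (x * Fz f x ((n:ℤ) - 2 * k)) := by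
            rw [ih, Finset.mul_sum]; exact Finset.sum_congr rfl fun k _ => by ring
        _ = _ := Finset.sum_congr rfl fun k _ => by
            rw [Fz_rec f x h0 h1 hrec]
    rw [step1]
    have split : ∑ k ∈ Finset.range (n + 2),
          bb n k * (Fz f x ((n:ℤ) - 2 * k + 1) + Fz f x ((n:ℤ) - 2 * k - 1))
        = (∑ k ∈ Finset.range (n + 2), bb n k * Fz f x ((n:ℤ) + 1 - 2 * k))
          + ∑ k ∈ Finset.range (n + 2), bb n k * Fz f x ((n:ℤ) - 1 - 2 * k) := by
      rw [← Finset.sum_add_distrib]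
      exact Finset.sum_congr rfl fun k _ => by
        rw [show (n:ℤ) - 2 * k + 1 = (n:ℤ) + 1 - 2 * k by ring,
          show (n:ℤ) - 2 * k - 1 = (n:ℤ) - 1 - 2 * k by ring]
        ring
    rw [split]
    have hA : (∑ k ∈ Finset.range (n + 2), bb n k * Fz f x ((n:ℤ) + 1 - 2 * k))
        = ∑ k ∈ Finset.range (n + 3), bb n k * Fz f x ((n:ℤ) + 1 - 2 * k) := by
      rw [Finset.sum_range_succ (n := n + 2)]
      have : bb n (n + 2) = 0 := by
        simp [bb, Nat.choose_eq_zero_of_lt (show n < n + 2 by omega),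
          Nat.choose_eq_zero_of_lt (show n < n + 1 by omega)]
      rw [this]; ring
    have hB : (∑ k ∈ Finset.range (n + 2), bb n k * Fz f x ((n:ℤ) - 1 - 2 * k))
        = ∑ k ∈ Finset.range (n + 3),
            (if k = 0 then (0:ℝ) else bb n (k-1)) * Fz f x ((n:ℤ) + 1 - 2 * k) := by
      rw [Finset.sum_range_succ' (fun k => (if k = 0 then (0:ℝ) else bb n (k-1))
        * Fz f x ((n:ℤ) + 1 - 2 * k)) (n + 2)]
      simp only [Nat.succ_ne_zero, if_false, Nat.add_sub_cancel, reduceIte,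
        zero_mul, add_zero]
      exact Finset.sum_congr rfl fun k _ => by
        rw [show ((n:ℤ) + 1 - 2 * ((k+1:ℕ):ℤ)) = (n:ℤ) - 1 - 2 * k by push_cast; ring]
    rw [hA, hB, ← Finset.sum_add_distrib]
    exact Finset.sum_congr rfl fun k _ => by
      rw [← add_mul, ← bb_pascal, show (((n+1:ℕ)):ℤ) - 2 * k = (n:ℤ) + 1 - 2 * k by
        push_cast; ring]

end Aux

theorem fib_poly_moment_expansion
    (f : ℕ → ℝ → ℝ)
    (h0 : ∀ x, f 0 x = 1) (h1 : ∀ x, f 1 x = x)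
    (hrec : ∀ n x, f (n + 2) x = x * f (n + 1) x - f n x) :
    ∀ (n : ℕ) (x : ℝ),
      x ^ n = ∑ k ∈ Finset.range (n / 2 + 1),
        ((n.choose k : ℝ) - (if k = 0 then 0 else (n.choose (k - 1) : ℝ))) *
          f (n - 2 * k) x := by
  intro n x
  set m := n / 2 with hm
  set S : ℕ → ℝ := fun k => bb n k * Fz f x ((n : ℤ) - 2 * k) with hS
  have hmain : 2 * x ^ n = ∑ k ∈ Finset.range (n + 2), S k := main f x h0 h1 hrec n
  have hrefl : ∀ k, k ≤ n + 1 → S (n + 1 - k) = S k := by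
    intro k hk
    have hc : ((n + 1 - k : ℕ) : ℤ) = (n : ℤ) + 1 - k := by omega
    have : (n : ℤ) - 2 * ((n + 1 - k : ℕ) : ℤ) = -((n:ℤ) - 2 * k) - 2 := by
      rw [hc]; ring
    simp only [hS, this, Fz_anti, bb_refl n k hk]
    ring
  have hsplit : ∑ k ∈ Finset.range (n + 2), S k
      = (∑ k ∈ Finset.range (m + 1), S k) + ∑ k ∈ Finset.Ico (m + 1) (n + 2), S k := by
    rw [Finset.range_eq_Ico, ← Finset.sum_Ico_consecutive _ (by omega : 0 ≤ m + 1)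
      (by omega : m + 1 ≤ n + 2), ← Finset.range_eq_Ico]
  have htail : ∑ k ∈ Finset.Ico (m + 1) (n + 2), S k = ∑ k ∈ Finset.range (m + 1), S k := by
    rw [Finset.sum_Ico_eq_sum_range]
    have hterm : ∀ j, j < n + 2 - (m + 1) → S (m + 1 + j) = S (n - m - j) := by
      intro j hj
      have h1' : m + 1 + j ≤ n + 1 := by omega
      have h2' : n + 1 - (m + 1 + j) = n - m - j := by omega
      rw [← h2', hrefl _ h1']
    rw [Finset.sum_congr rfl (fun j hj => hterm j (Finset.mem_range.mp hj))]
    rcases Nat.even_or_odd n with ⟨p, hp⟩ | ⟨p, hp⟩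
    · have hpm : m = p := by omega
      have he : n + 2 - (m + 1) = m + 1 := by omega
      rw [he]
      have : ∀ j, j < m + 1 → n - m - j = m + 1 - 1 - j := by omega
      rw [Finset.sum_congr rfl (fun j hj => by rw [this j (Finset.mem_range.mp hj)])]
      exact Finset.sum_range_reflect S (m + 1)
    · have hpm : m = p := by omega
      have he : n + 2 - (m + 1) = m + 2 := by omega
      rw [he]
      have : ∀ j, j < m + 2 → n - m - j = m + 2 - 1 - j := by omega
      rw [Finset.sum_congr rfl (fun j hj => by rw [this j (Finset.mem_range.mp hj)])]
      rw [Finset.sum_range_reflect S (m + 2), Finset.sum_range_succ]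
      have hSm : S (m + 1) = 0 := by
        have : (n : ℤ) - 2 * ((m + 1 : ℕ) : ℤ) = -1 := by omega
        simp only [hS, this, Fz_negone, mul_zero]
      rw [hSm, add_zero]
  have h2 : 2 * x ^ n = 2 * ∑ k ∈ Finset.range (m + 1), S k := by
    rw [hmain, hsplit, htail]; ring
  have hx : x ^ n = ∑ k ∈ Finset.range (m + 1), S k := by linarith
  rw [hx]
  refine Finset.sum_congr rfl fun k hk => ?_
  have hk' : 2 * k ≤ n := by
    have := Finset.mem_range.mp hk
    omega
  have : ((n - 2 * k : ℕ) : ℤ) = (n : ℤ) - 2 * k := by omega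
  rw [hS]
  simp only [← this, Fz_nat, bb]
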